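/- Size-reduction formula for a simple component: let N = 2n with n ≥ 1 and let w₁,…,w_{2n} be nonzero complex numbers with q w_j/w_k ∉ {1,−1} for 1 ≤ j < k ≤ 2n. Then the component of the renormalised Bethe vector on the basis vector with n letters ⇑ followed by n letters ⇓ equals ⟨⇑…⇑⇓…⇓|Ψ̃(w₁,…,w_{2n})⟩ = ( ∏_{j=1}^{2n} ∏_{k=1}^{n} [q⁻¹ w_j/w_k] ) / ( ([q][q²])^n ∏_{1≤j<k≤2n} [q w_j/w_k] ) · ⟨∨| ℬ'(w₁) ℬ'(w₂) ⋯ ℬ'(w_{2n}) |∧'⟩, where ℬ'(z) := ℬ(z | w_{n+1},…,w_{2n}) is the ℬ-operator of the n-site monodromy matrix with inhomogeneities w_{n+1},…,w_{2n}, |∧'⟩ = |⇑⟩^{⊗n}, and ⟨∨|X|∧'⟩ denotes the matrix entry of the operator X on (ℂ³)^{⊗n} between the basis vectors |⇓⟩^{⊗n} (output) and |⇑⟩^{⊗n} (input). -/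

import Mathlib

open Matrix BigOperators Finset

noncomputable section

/-- `[z] = z - z⁻¹`. -/
def br (z : ℂ) : ℂ := z - z⁻¹

/-- R-matrix `R^{(1,2)}(z)` on ℂ²⊗ℂ³; basis `(ε, σ)` with ε ∈ {0=↑,1=↓}, σ ∈ {0=⇑,1=0,2=⇓}. -/
def R12 (q c z : ℂ) : Matrix (Fin 2 × Fin 3) (Fin 2 × Fin 3) ℂ :=
  Matrix.of fun p p' =>
    if p = (0,0) ∧ p' = (0,0) then br (q^2*z)
    else if p = (0,1) ∧ p' = (0,1) then br (q*z)
    else if p = (0,2) ∧ p' = (0,2) then br z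
    else if p = (1,0) ∧ p' = (1,0) then br z
    else if p = (1,1) ∧ p' = (1,1) then br (q*z)
    else if p = (1,2) ∧ p' = (1,2) then br (q^2*z)
    else if p = (0,1) ∧ p' = (1,0) then c
    else if p = (0,2) ∧ p' = (1,1) then c
    else if p = (1,0) ∧ p' = (0,1) then c
    else if p = (1,1) ∧ p' = (0,2) then c
    else 0

/-- `R^{(1,2)}` acting on the auxiliary ℂ² and the j-th site of `(ℂ³)^{⊗N}`. -/
def R12at (q c z : ℂ) {N : ℕ} (j : Fin N) :
    Matrix (Fin 2 × (Fin N → Fin 3)) (Fin 2 × (Fin N → Fin 3)) ℂ :=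
  Matrix.of fun p p' =>
    R12 q c z (p.1, p.2 j) (p'.1, p'.2 j) *
      if ∀ k, k ≠ j → p.2 k = p'.2 k then 1 else 0

-- auxiliary
lemma R12_aux : ∀ p p' : Fin 2 × Fin 3, (p.1 : ℕ) + (p.2 : ℕ) ≠ (p'.1 : ℕ) + (p'.2 : ℕ) →
    ¬(p = (0,0) ∧ p' = (0,0)) ∧ ¬(p = (0,1) ∧ p' = (0,1)) ∧ ¬(p = (0,2) ∧ p' = (0,2)) ∧
    ¬(p = (1,0) ∧ p' = (1,0)) ∧ ¬(p = (1,1) ∧ p' = (1,1)) ∧ ¬(p = (1,2) ∧ p' = (1,2)) ∧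
    ¬(p = (0,1) ∧ p' = (1,0)) ∧ ¬(p = (0,2) ∧ p' = (1,1)) ∧
    ¬(p = (1,0) ∧ p' = (0,1)) ∧ ¬(p = (1,1) ∧ p' = (0,2)) := by decide

lemma R12_conserve (q c z : ℂ) (p p' : Fin 2 × Fin 3)
    (h : (p.1 : ℕ) + (p.2 : ℕ) ≠ (p'.1 : ℕ) + (p'.2 : ℕ)) : R12 q c z p p' = 0 := by
  obtain ⟨H1,H2,H3,H4,H5,H6,H7,H8,H9,H10⟩ := R12_aux p p' h
  simp only [R12, Matrix.of_apply, if_neg H1, if_neg H2, if_neg H3, if_neg H4, if_neg H5,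
    if_neg H6, if_neg H7, if_neg H8, if_neg H9, if_neg H10]

lemma R12_row_aux : ∀ p' : Fin 2 × Fin 3, p' ≠ (1,0) → p' ≠ (0,1) →
    ¬(((1,0) : Fin 2 × Fin 3) = (0,0) ∧ p' = (0,0)) ∧ ¬(((1,0) : Fin 2 × Fin 3) = (0,1) ∧ p' = (0,1)) ∧
    ¬(((1,0) : Fin 2 × Fin 3) = (0,2) ∧ p' = (0,2)) ∧
    ¬(((1,0) : Fin 2 × Fin 3) = (1,0) ∧ p' = (1,0)) ∧ ¬(((1,0) : Fin 2 × Fin 3) = (1,1) ∧ p' = (1,1)) ∧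
    ¬(((1,0) : Fin 2 × Fin 3) = (1,2) ∧ p' = (1,2)) ∧
    ¬(((1,0) : Fin 2 × Fin 3) = (0,1) ∧ p' = (1,0)) ∧ ¬(((1,0) : Fin 2 × Fin 3) = (0,2) ∧ p' = (1,1)) ∧
    ¬(((1,0) : Fin 2 × Fin 3) = (1,0) ∧ p' = (0,1)) ∧ ¬(((1,0) : Fin 2 × Fin 3) = (1,1) ∧ p' = (0,2)) := by
  decide

lemma R12_row10 (q c z : ℂ) (p' : Fin 2 × Fin 3) (h1 : p' ≠ (1,0)) (h2 : p' ≠ (0,1)) :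
    R12 q c z (1,0) p' = 0 := by
  obtain ⟨H1,H2,H3,H4,H5,H6,H7,H8,H9,H10⟩ := R12_row_aux p' h1 h2
  simp only [R12, Matrix.of_apply, if_neg H1, if_neg H2, if_neg H3, if_neg H4, if_neg H5,
    if_neg H6, if_neg H7, if_neg H8, if_neg H9, if_neg H10]
  simp [h1, h2]

lemma R12_1010 (q c z : ℂ) : R12 q c z (1,0) (1,0) = br z := by
  simp [R12]

lemma R12at_ne_zero {q c z : ℂ} {N : ℕ} {j : Fin N} {p p' : Fin 2 × (Fin N → Fin 3)}
    (h : R12at q c z j p p' ≠ 0) :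
    (∀ k, k ≠ j → p.2 k = p'.2 k) ∧ R12 q c z (p.1, p.2 j) (p'.1, p'.2 j) ≠ 0 := by
  by_cases hk : ∀ k, k ≠ j → p.2 k = p'.2 k
  · refine ⟨hk, fun h0 => h ?_⟩
    simp [R12at, h0]
  · exact absurd (by simp [R12at, hk]) h

/-- Partial monodromy: ordered product of `R12at` over a list of sites. -/
def PL (q c : ℂ) {N : ℕ} (zf : Fin N → ℂ) (L : List (Fin N)) :
    Matrix (Fin 2 × (Fin N → Fin 3)) (Fin 2 × (Fin N → Fin 3)) ℂ :=
  (L.map fun j => R12at q c (zf j) j).prod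

lemma PL_nil (q c : ℂ) {N : ℕ} (zf : Fin N → ℂ) : PL q c zf [] = 1 := rfl

lemma PL_cons (q c : ℂ) {N : ℕ} (zf : Fin N → ℂ) (j : Fin N) (L : List (Fin N)) :
    PL q c zf (j :: L) = R12at q c (zf j) j * PL q c zf L := by
  simp [PL]

def wtf {N : ℕ} (σ : Fin N → Fin 3) : ℕ := ∑ i, (σ i : ℕ)

lemma PL_support {q c : ℂ} {N : ℕ} {zf : Fin N → ℂ} :
    ∀ (L : List (Fin N)) (p p' : Fin 2 × (Fin N → Fin 3)), PL q c zf L p p' ≠ 0 →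
      ∀ k, k ∉ L → p.2 k = p'.2 k := by
  intro L
  induction L with
  | nil =>
    intro p p' h k _
    rw [PL_nil, Matrix.one_apply] at h
    have : p = p' := by by_contra hne; simp [hne] at h
    rw [this]
  | cons j L ih =>
    intro p p' h k hk
    rw [PL_cons, Matrix.mul_apply] at h
    obtain ⟨x, -, hx⟩ := Finset.exists_ne_zero_of_sum_ne_zero h
    obtain ⟨h1, h2⟩ := mul_ne_zero_iff.mp hx
    have hkj : k ≠ j := fun hh => hk (hh ▸ (List.mem_cons_self : j ∈ j :: L))
    have hkL : k ∉ L := fun hh => hk (List.mem_cons_of_mem j hh)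
    calc p.2 k = x.2 k := (R12at_ne_zero h1).1 k hkj
    _ = p'.2 k := ih x p' h2 k hkL

lemma wtf_eq_off {N : ℕ} {σ τ : Fin N → Fin 3} (j : Fin N) (h : ∀ k, k ≠ j → σ k = τ k) :
    wtf σ + (τ j : ℕ) = wtf τ + (σ j : ℕ) := by
  unfold wtf
  rw [← Finset.add_sum_erase Finset.univ _ (Finset.mem_univ j),
      ← Finset.add_sum_erase Finset.univ (fun i => (τ i : ℕ)) (Finset.mem_univ j)]
  have : ∑ k ∈ Finset.univ.erase j, (σ k : ℕ) = ∑ k ∈ Finset.univ.erase j, (τ k : ℕ) :=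
    Finset.sum_congr rfl fun k hk => by rw [h k (Finset.ne_of_mem_erase hk)]
  omega

lemma PL_weight {q c : ℂ} {N : ℕ} {zf : Fin N → ℂ} :
    ∀ (L : List (Fin N)) (p p' : Fin 2 × (Fin N → Fin 3)), PL q c zf L p p' ≠ 0 →
      (p.1 : ℕ) + wtf p.2 = (p'.1 : ℕ) + wtf p'.2 := by
  intro L
  induction L with
  | nil =>
    intro p p' h
    rw [PL_nil, Matrix.one_apply] at h
    have : p = p' := by by_contra hne; simp [hne] at h
    rw [this]
  | cons j L ih =>
    intro p p' h
    rw [PL_cons, Matrix.mul_apply] at h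
    obtain ⟨x, -, hx⟩ := Finset.exists_ne_zero_of_sum_ne_zero h
    obtain ⟨h1, h2⟩ := mul_ne_zero_iff.mp hx
    obtain ⟨hoff, hR⟩ := R12at_ne_zero h1
    have hcons : (p.1 : ℕ) + (p.2 j : ℕ) = (x.1 : ℕ) + (x.2 j : ℕ) := by
      by_contra hne
      exact hR (R12_conserve _ _ _ _ _ hne)
    have hsum := wtf_eq_off j hoff
    have := ih x p' h2
    omega

lemma wtf_zero {N : ℕ} : wtf (fun _ : Fin N => (0 : Fin 3)) = 0 := by simp [wtf]

lemma wtf_eq_zero {N : ℕ} {τ : Fin N → Fin 3} (h : wtf τ = 0) : τ = fun _ => 0 := by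
  funext i
  have := Finset.sum_eq_zero_iff.mp h i (Finset.mem_univ i)
  exact Fin.ext (by simpa using this)

/-- Row lemma: the `((↓,⇑…⇑),(↓,τ))`-entry of a partial monodromy with distinct sites. -/
lemma PL_row {q c : ℂ} {N : ℕ} {zf : Fin N → ℂ} :
    ∀ (L : List (Fin N)), L.Nodup → ∀ τ : Fin N → Fin 3,
      PL q c zf L (1, fun _ => 0) (1, τ) =
        (if τ = fun _ => 0 then 1 else 0) * (L.map fun j => br (zf j)).prod := by
  intro L
  induction L with
  | nil =>
    intro _ τ
    rw [PL_nil, Matrix.one_apply]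
    by_cases h : τ = fun _ => 0 <;> simp [h, Prod.ext_iff, eq_comm]
  | cons j L ih =>
    intro hnd τ
    have hjL : j ∉ L := (List.nodup_cons.mp hnd).1
    have hLnd : L.Nodup := (List.nodup_cons.mp hnd).2
    rw [PL_cons, Matrix.mul_apply]
    rw [Finset.sum_eq_single ((1 : Fin 2), fun _ : Fin N => (0 : Fin 3))]
    · have hdiag : R12at q c (zf j) j (1, fun _ => 0) (1, fun _ => 0) = br (zf j) := by
        simp [R12at, R12_1010]
      rw [hdiag, ih hLnd τ, List.map_cons, List.prod_cons]
      ring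
    · rintro ⟨ε, ρ⟩ - hx
      by_contra h0
      obtain ⟨h1, h2⟩ := mul_ne_zero_iff.mp h0
      obtain ⟨hoff, hR⟩ := R12at_ne_zero h1
      simp only at hoff hR
      -- (ε, ρ j) must be (1,0) or (0,1)
      by_cases hc1 : ((ε, ρ j) : Fin 2 × Fin 3) = (1, 0)
      · -- then ρ = 0 everywhere, contradiction with hx
        simp only [Prod.mk.injEq] at hc1
        obtain ⟨hε, hρj⟩ := hc1
        have : ρ = fun _ => 0 := by
          funext k
          by_cases hk : k = j
          · subst hk; exact hρj
          · exact ((hoff k hk).symm)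
        exact hx (by rw [hε, this])
      · by_cases hc2 : ((ε, ρ j) : Fin 2 × Fin 3) = (0, 1)
        · -- weight + support contradiction
          simp only [Prod.mk.injEq] at hc2
          obtain ⟨hε, hρj⟩ := hc2
          have hwt := PL_weight L (ε, ρ) (1, τ) h2
          have hsupp := PL_support L (ε, ρ) (1, τ) h2 j hjL
          simp only at hwt hsupp
          have hρwt : wtf ρ = 1 := by
            unfold wtf
            rw [Finset.sum_eq_single j]
            · simp [hρj]
            · intro k _ hk
              simp [← hoff k hk]
            · simp
          have hτj : (τ j : ℕ) = 1 := by simp [← hsupp, hρj]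
          have hτwt : 1 ≤ wtf τ := by
            unfold wtf
            calc 1 = (τ j : ℕ) := hτj.symm
            _ ≤ _ := Finset.single_le_sum (f := fun i => (τ i : ℕ))
              (fun i _ => Nat.zero_le _) (Finset.mem_univ j)
          rw [hε] at hwt
          simp [Fin.val_one, Fin.val_zero] at hwt
          omega
        · exact hR (R12_row10 _ _ _ _ hc1 hc2)
    · simp

lemma append_eq_append_iff {n m : ℕ} {α : Type*} {a a' : Fin n → α} {b b' : Fin m → α} :
    Fin.append a b = Fin.append a' b' ↔ a = a' ∧ b = b' := by
  constructor
  · intro h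
    constructor
    · funext k
      have := congrFun h (Fin.castAdd m k)
      simpa only [Fin.append_left] using this
    · funext k
      have := congrFun h (Fin.natAdd n k)
      simpa only [Fin.append_right] using this
  · rintro ⟨rfl, rfl⟩; rfl

def appendEquiv (n : ℕ) : ((Fin n → Fin 3) × (Fin n → Fin 3)) ≃ (Fin (n + n) → Fin 3) where
  toFun p := Fin.append p.1 p.2
  invFun χ := (fun i => χ (Fin.castAdd n i), fun i => χ (Fin.natAdd n i))
  left_inv p := by
    ext i
    · simp only [Fin.append_left]
    · simp only [Fin.append_right]
  right_inv χ := by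
    funext i
    induction i using Fin.addCases with
    | left i => simp only [Fin.append_left]
    | right i => simp only [Fin.append_right]

lemma castAdd_ne_natAdd {n m : ℕ} (i : Fin n) (k : Fin m) :
    Fin.natAdd n k ≠ Fin.castAdd m i := by
  simp only [Fin.ne_iff_vne, Fin.coe_natAdd, Fin.coe_castAdd]
  have := i.isLt
  omega

lemma ite_and_one_mul {P Q : Prop} [Decidable P] [Decidable Q] :
    (if P ∧ Q then (1:ℂ) else 0) = (if P then (1:ℂ) else 0) * (if Q then (1:ℂ) else 0) := by
  by_cases hP : P <;> by_cases hQ : Q <;> simp [hP, hQ]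

lemma R12at_castAdd (q c z : ℂ) {n : ℕ} (j : Fin n) (e₁ e₂ : Fin 2)
    (a a' b b' : Fin n → Fin 3) :
    R12at q c z (Fin.castAdd n j) (e₁, Fin.append a b) (e₂, Fin.append a' b') =
      R12at q c z j (e₁, a) (e₂, a') * (if b = b' then 1 else 0) := by
  have hiff : (∀ k, k ≠ Fin.castAdd n j → Fin.append a b k = Fin.append a' b' k) ↔
      ((∀ k, k ≠ j → a k = a' k) ∧ b = b') := by
    constructor
    · intro h
      constructor
      · intro k hk
        have := h (Fin.castAdd n k) (fun hh => hk (by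
          simpa only [Fin.ext_iff, Fin.coe_castAdd] using congrArg Fin.val hh))
        simpa only [Fin.append_left] using this
      · funext k
        have := h (Fin.natAdd n k) (castAdd_ne_natAdd j k)
        simpa only [Fin.append_right] using this
    · rintro ⟨h1, rfl⟩
      intro k hk
      induction k using Fin.addCases with
      | left i =>
        simp only [Fin.append_left]
        exact h1 i (fun hh => hk (by rw [hh]))
      | right i => simp only [Fin.append_right]
  simp only [R12at, Matrix.of_apply, Fin.append_left]
  rw [if_congr hiff rfl rfl, ite_and_one_mul]
  ring

lemma R12at_natAdd (q c z : ℂ) {n : ℕ} (j : Fin n) (e₁ e₂ : Fin 2)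
    (a a' b b' : Fin n → Fin 3) :
    R12at q c z (Fin.natAdd n j) (e₁, Fin.append a b) (e₂, Fin.append a' b') =
      R12at q c z j (e₁, b) (e₂, b') * (if a = a' then 1 else 0) := by
  have hiff : (∀ k, k ≠ Fin.natAdd n j → Fin.append a b k = Fin.append a' b' k) ↔
      ((∀ k, k ≠ j → b k = b' k) ∧ a = a') := by
    constructor
    · intro h
      constructor
      · intro k hk
        have := h (Fin.natAdd n k) (fun hh => hk (Fin.ext (by
          have := congrArg Fin.val hh
          simp only [Fin.coe_natAdd] at this
          omega)))
        simpa only [Fin.append_right] using this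
      · funext k
        have := h (Fin.castAdd n k) (Ne.symm (castAdd_ne_natAdd k j))
        simpa only [Fin.append_left] using this
    · rintro ⟨h1, rfl⟩
      intro k hk
      induction k using Fin.addCases with
      | left i => simp only [Fin.append_left]
      | right i =>
        simp only [Fin.append_right]
        exact h1 i (fun hh => hk (by rw [hh]))
  simp only [R12at, Matrix.of_apply, Fin.append_right]
  rw [if_congr hiff rfl rfl, ite_and_one_mul]
  ring

lemma delta_sum {n : ℕ} (b b' : Fin n → Fin 3) :
    ∑ ρ : Fin n → Fin 3, (if b = ρ then (1:ℂ) else 0) * (if ρ = b' then 1 else 0) =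
      if b = b' then 1 else 0 := by
  simp only [ite_mul, one_mul, zero_mul]
  rw [Finset.sum_ite_eq]
  simp

lemma PL_castList (q c : ℂ) {n : ℕ} (zf : Fin (n+n) → ℂ) (L : List (Fin n)) :
    ∀ (e₁ e₂ : Fin 2) (a a' b b' : Fin n → Fin 3),
    PL q c zf (L.map (Fin.castAdd n)) (e₁, Fin.append a b) (e₂, Fin.append a' b') =
      PL q c (fun j => zf (Fin.castAdd n j)) L (e₁, a) (e₂, a') *
        (if b = b' then 1 else 0) := by
  induction L with
  | nil =>
    intro e₁ e₂ a a' b b'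
    simp only [List.map_nil, PL_nil, Matrix.one_apply, Prod.mk.injEq, append_eq_append_iff]
    by_cases h1 : e₁ = e₂ <;> by_cases h2 : a = a' <;> by_cases h3 : b = b' <;>
      simp [h1, h2, h3]
  | cons j L ih =>
    intro e₁ e₂ a a' b b'
    rw [List.map_cons, PL_cons, PL_cons, Matrix.mul_apply, Matrix.mul_apply]
    calc
      ∑ x : Fin 2 × (Fin (n+n) → Fin 3),
          R12at q c (zf (Fin.castAdd n j)) (Fin.castAdd n j) (e₁, Fin.append a b) x *
            PL q c zf (L.map (Fin.castAdd n)) x (e₂, Fin.append a' b')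
        = ∑ y : Fin 2 × ((Fin n → Fin 3) × (Fin n → Fin 3)),
            R12at q c (zf (Fin.castAdd n j)) (Fin.castAdd n j) (e₁, Fin.append a b)
                (y.1, Fin.append y.2.1 y.2.2) *
              PL q c zf (L.map (Fin.castAdd n)) (y.1, Fin.append y.2.1 y.2.2)
                (e₂, Fin.append a' b') := by
          rw [← Equiv.sum_comp ((Equiv.refl (Fin 2)).prodCongr (appendEquiv n))
            (fun x => R12at q c (zf (Fin.castAdd n j)) (Fin.castAdd n j)
              (e₁, Fin.append a b) x *
              PL q c zf (L.map (Fin.castAdd n)) x (e₂, Fin.append a' b'))]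
          rfl
      _ = ∑ y : Fin 2 × ((Fin n → Fin 3) × (Fin n → Fin 3)),
            (R12at q c (zf (Fin.castAdd n j)) j (e₁, a) (y.1, y.2.1) *
              PL q c (fun j => zf (Fin.castAdd n j)) L (y.1, y.2.1) (e₂, a')) *
            ((if b = y.2.2 then 1 else 0) * (if y.2.2 = b' then 1 else 0)) := by
          refine Finset.sum_congr rfl fun y _ => ?_
          rw [R12at_castAdd, ih]
          ring
      _ = ∑ ε : Fin 2, ∑ ρa : Fin n → Fin 3, ∑ ρb : Fin n → Fin 3,
            (R12at q c (zf (Fin.castAdd n j)) j (e₁, a) (ε, ρa) *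
              PL q c (fun j => zf (Fin.castAdd n j)) L (ε, ρa) (e₂, a')) *
            ((if b = ρb then 1 else 0) * (if ρb = b' then 1 else 0)) := by
          rw [Fintype.sum_prod_type]
          refine Finset.sum_congr rfl fun ε _ => ?_
          rw [Fintype.sum_prod_type]
      _ = ∑ ε : Fin 2, ∑ ρa : Fin n → Fin 3,
            (R12at q c (zf (Fin.castAdd n j)) j (e₁, a) (ε, ρa) *
              PL q c (fun j => zf (Fin.castAdd n j)) L (ε, ρa) (e₂, a')) *
            (if b = b' then 1 else 0) := by
          refine Finset.sum_congr rfl fun ε _ => Finset.sum_congr rfl fun ρa _ => ?_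
          rw [← Finset.mul_sum, delta_sum]
      _ = (∑ x : Fin 2 × (Fin n → Fin 3),
            R12at q c (zf (Fin.castAdd n j)) j (e₁, a) x *
              PL q c (fun j => zf (Fin.castAdd n j)) L x (e₂, a')) *
            (if b = b' then 1 else 0) := by
          rw [Fintype.sum_prod_type, Finset.sum_mul]
          refine Finset.sum_congr rfl fun ε _ => ?_
          rw [Finset.sum_mul]

lemma PL_natList (q c : ℂ) {n : ℕ} (zf : Fin (n+n) → ℂ) (L : List (Fin n)) :
    ∀ (e₁ e₂ : Fin 2) (a a' b b' : Fin n → Fin 3),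
    PL q c zf (L.map (Fin.natAdd n)) (e₁, Fin.append a b) (e₂, Fin.append a' b') =
      PL q c (fun j => zf (Fin.natAdd n j)) L (e₁, b) (e₂, b') *
        (if a = a' then 1 else 0) := by
  induction L with
  | nil =>
    intro e₁ e₂ a a' b b'
    simp only [List.map_nil, PL_nil, Matrix.one_apply, Prod.mk.injEq, append_eq_append_iff]
    by_cases h1 : e₁ = e₂ <;> by_cases h2 : a = a' <;> by_cases h3 : b = b' <;>
      simp [h1, h2, h3]
  | cons j L ih =>
    intro e₁ e₂ a a' b b'
    rw [List.map_cons, PL_cons, PL_cons, Matrix.mul_apply, Matrix.mul_apply]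
    calc
      ∑ x : Fin 2 × (Fin (n+n) → Fin 3),
          R12at q c (zf (Fin.natAdd n j)) (Fin.natAdd n j) (e₁, Fin.append a b) x *
            PL q c zf (L.map (Fin.natAdd n)) x (e₂, Fin.append a' b')
        = ∑ y : Fin 2 × ((Fin n → Fin 3) × (Fin n → Fin 3)),
            R12at q c (zf (Fin.natAdd n j)) (Fin.natAdd n j) (e₁, Fin.append a b)
                (y.1, Fin.append y.2.1 y.2.2) *
              PL q c zf (L.map (Fin.natAdd n)) (y.1, Fin.append y.2.1 y.2.2)
                (e₂, Fin.append a' b') := by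
          rw [← Equiv.sum_comp ((Equiv.refl (Fin 2)).prodCongr (appendEquiv n))
            (fun x => R12at q c (zf (Fin.natAdd n j)) (Fin.natAdd n j)
              (e₁, Fin.append a b) x *
              PL q c zf (L.map (Fin.natAdd n)) x (e₂, Fin.append a' b'))]
          rfl
      _ = ∑ y : Fin 2 × ((Fin n → Fin 3) × (Fin n → Fin 3)),
            (R12at q c (zf (Fin.natAdd n j)) j (e₁, b) (y.1, y.2.2) *
              PL q c (fun j => zf (Fin.natAdd n j)) L (y.1, y.2.2) (e₂, b')) *
            ((if a = y.2.1 then 1 else 0) * (if y.2.1 = a' then 1 else 0)) := by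
          refine Finset.sum_congr rfl fun y _ => ?_
          rw [R12at_natAdd, ih]
          ring
      _ = ∑ ε : Fin 2, ∑ ρa : Fin n → Fin 3, ∑ ρb : Fin n → Fin 3,
            (R12at q c (zf (Fin.natAdd n j)) j (e₁, b) (ε, ρb) *
              PL q c (fun j => zf (Fin.natAdd n j)) L (ε, ρb) (e₂, b')) *
            ((if a = ρa then 1 else 0) * (if ρa = a' then 1 else 0)) := by
          rw [Fintype.sum_prod_type]
          refine Finset.sum_congr rfl fun ε _ => ?_
          rw [Fintype.sum_prod_type]
      _ = ∑ ε : Fin 2, ∑ ρb : Fin n → Fin 3,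
            (R12at q c (zf (Fin.natAdd n j)) j (e₁, b) (ε, ρb) *
              PL q c (fun j => zf (Fin.natAdd n j)) L (ε, ρb) (e₂, b')) *
            (if a = a' then 1 else 0) := by
          refine Finset.sum_congr rfl fun ε _ => ?_
          rw [Finset.sum_comm]
          refine Finset.sum_congr rfl fun ρb _ => ?_
          rw [← Finset.mul_sum, delta_sum]
      _ = (∑ x : Fin 2 × (Fin n → Fin 3),
            R12at q c (zf (Fin.natAdd n j)) j (e₁, b) x *
              PL q c (fun j => zf (Fin.natAdd n j)) L x (e₂, b')) *
            (if a = a' then 1 else 0) := by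
          rw [Fintype.sum_prod_type, Finset.sum_mul]
          refine Finset.sum_congr rfl fun ε _ => ?_
          rw [Finset.sum_mul]

/-- Monodromy matrix `𝒯_a(z) = R^{(1,2)}_{a,N}(q⁻¹z/w_N) ⋯ R^{(1,2)}_{a,1}(q⁻¹z/w₁)`. -/
def monodromy (q c : ℂ) {N : ℕ} (w : Fin N → ℂ) (z : ℂ) :
    Matrix (Fin 2 × (Fin N → Fin 3)) (Fin 2 × (Fin N → Fin 3)) ℂ :=
  (((List.finRange N).reverse).map fun j => R12at q c (q⁻¹ * z / w j) j).prod

lemma monodromy_eq_PL (q c : ℂ) {N : ℕ} (w : Fin N → ℂ) (z : ℂ) :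
    monodromy q c w z = PL q c (fun j => q⁻¹ * z / w j) (List.finRange N).reverse := rfl

lemma PL_append (q c : ℂ) {N : ℕ} (zf : Fin N → ℂ) (L1 L2 : List (Fin N)) :
    PL q c zf (L1 ++ L2) = PL q c zf L1 * PL q c zf L2 := by
  simp [PL]

lemma finRange_add (m n : ℕ) : List.finRange (m+n) =
    (List.finRange m).map (Fin.castAdd n) ++ (List.finRange n).map (Fin.natAdd m) := by
  apply List.ext_getElem
  · simp
  · intro i h1 h2
    simp only [List.getElem_finRange]
    rcases lt_or_ge i m with h | h
    · rw [List.getElem_append_left (by simpa using h)]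
      simp [List.getElem_finRange, Fin.ext_iff]
    · rw [List.getElem_append_right (by simpa using h)]
      simp [List.getElem_finRange, Fin.ext_iff]
      omega

lemma sum_delta_right {n : ℕ} (f : (Fin n → Fin 3) → ℂ) (b' : Fin n → Fin 3) :
    ∑ ρ : Fin n → Fin 3, f ρ * (if ρ = b' then 1 else 0) = f b' := by
  simp only [mul_ite, mul_one, mul_zero, Finset.sum_ite_eq', Finset.mem_univ, if_true]

lemma sum_delta_left {n : ℕ} (f : (Fin n → Fin 3) → ℂ) (a : Fin n → Fin 3) :
    ∑ ρ : Fin n → Fin 3, (if a = ρ then 1 else 0) * f ρ = f a := by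
  simp only [ite_mul, one_mul, zero_mul, Finset.sum_ite_eq, Finset.mem_univ, if_true]

lemma mono_split (q c z : ℂ) {n : ℕ} (w : Fin (n+n) → ℂ) (e₁ e₂ : Fin 2)
    (a a' b b' : Fin n → Fin 3) :
    monodromy q c w z (e₁, Fin.append a b) (e₂, Fin.append a' b') =
      ∑ ε : Fin 2, monodromy q c (fun k => w (Fin.natAdd n k)) z (e₁, b) (ε, b') *
        monodromy q c (fun k => w (Fin.castAdd n k)) z (ε, a) (e₂, a') := by
  have hsplit : (List.finRange (n+n)).reverse =
      ((List.finRange n).reverse.map (Fin.natAdd n)) ++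
        ((List.finRange n).reverse.map (Fin.castAdd n)) := by
    rw [finRange_add, List.reverse_append, List.map_reverse, List.map_reverse]
  rw [monodromy_eq_PL, hsplit, PL_append, Matrix.mul_apply]
  calc
    ∑ x : Fin 2 × (Fin (n+n) → Fin 3),
        PL q c (fun j => q⁻¹ * z / w j) ((List.finRange n).reverse.map (Fin.natAdd n))
            (e₁, Fin.append a b) x *
          PL q c (fun j => q⁻¹ * z / w j) ((List.finRange n).reverse.map (Fin.castAdd n))
            x (e₂, Fin.append a' b')
      = ∑ y : Fin 2 × ((Fin n → Fin 3) × (Fin n → Fin 3)),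
          PL q c (fun j => q⁻¹ * z / w j) ((List.finRange n).reverse.map (Fin.natAdd n))
              (e₁, Fin.append a b) (y.1, Fin.append y.2.1 y.2.2) *
            PL q c (fun j => q⁻¹ * z / w j) ((List.finRange n).reverse.map (Fin.castAdd n))
              (y.1, Fin.append y.2.1 y.2.2) (e₂, Fin.append a' b') := by
        rw [← Equiv.sum_comp ((Equiv.refl (Fin 2)).prodCongr (appendEquiv n))
          (fun x => PL q c (fun j => q⁻¹ * z / w j)
              ((List.finRange n).reverse.map (Fin.natAdd n)) (e₁, Fin.append a b) x *
            PL q c (fun j => q⁻¹ * z / w j) ((List.finRange n).reverse.map (Fin.castAdd n))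
              x (e₂, Fin.append a' b'))]
        rfl
    _ = ∑ ε : Fin 2, ∑ ρa : Fin n → Fin 3, ∑ ρb : Fin n → Fin 3,
          (if a = ρa then 1 else 0) *
          (PL q c (fun j => q⁻¹ * z / w (Fin.natAdd n j)) (List.finRange n).reverse
              (e₁, b) (ε, ρb) *
            PL q c (fun j => q⁻¹ * z / w (Fin.castAdd n j)) (List.finRange n).reverse
              (ε, ρa) (e₂, a') *
          (if ρb = b' then 1 else 0)) := by
        rw [Fintype.sum_prod_type]
        refine Finset.sum_congr rfl fun ε _ => ?_
        rw [Fintype.sum_prod_type]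
        refine Finset.sum_congr rfl fun ρa _ => Finset.sum_congr rfl fun ρb _ => ?_
        rw [PL_natList, PL_castList]
        ring
    _ = ∑ ε : Fin 2,
          PL q c (fun j => q⁻¹ * z / w (Fin.natAdd n j)) (List.finRange n).reverse
              (e₁, b) (ε, b') *
            PL q c (fun j => q⁻¹ * z / w (Fin.castAdd n j)) (List.finRange n).reverse
              (ε, a) (e₂, a') := by
        refine Finset.sum_congr rfl fun ε _ => ?_
        have step1 : ∀ ρa : Fin n → Fin 3, (∑ ρb : Fin n → Fin 3,
            (if a = ρa then (1:ℂ) else 0) *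
            (PL q c (fun j => q⁻¹ * z / w (Fin.natAdd n j)) (List.finRange n).reverse
                (e₁, b) (ε, ρb) *
              PL q c (fun j => q⁻¹ * z / w (Fin.castAdd n j)) (List.finRange n).reverse
                (ε, ρa) (e₂, a') * (if ρb = b' then 1 else 0))) =
            (if a = ρa then (1:ℂ) else 0) * (∑ ρb : Fin n → Fin 3,
            (PL q c (fun j => q⁻¹ * z / w (Fin.natAdd n j)) (List.finRange n).reverse
                (e₁, b) (ε, ρb) *
              PL q c (fun j => q⁻¹ * z / w (Fin.castAdd n j)) (List.finRange n).reverse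
                (ε, ρa) (e₂, a') * (if ρb = b' then 1 else 0))) := by
          intro ρa; rw [← Finset.mul_sum]
        rw [Finset.sum_congr rfl fun ρa _ => step1 ρa]
        rw [sum_delta_left (fun ρa => ∑ ρb : Fin n → Fin 3,
          (PL q c (fun j => q⁻¹ * z / w (Fin.natAdd n j)) (List.finRange n).reverse
              (e₁, b) (ε, ρb) *
            PL q c (fun j => q⁻¹ * z / w (Fin.castAdd n j)) (List.finRange n).reverse
              (ε, ρa) (e₂, a') * (if ρb = b' then 1 else 0)))]
        rw [sum_delta_right (fun ρb =>
          PL q c (fun j => q⁻¹ * z / w (Fin.natAdd n j)) (List.finRange n).reverse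
              (e₁, b) (ε, ρb) *
            PL q c (fun j => q⁻¹ * z / w (Fin.castAdd n j)) (List.finRange n).reverse
              (ε, a) (e₂, a'))]

/-- The operator 𝒜(z): auxiliary block (↑,↑) of the monodromy matrix. -/
def Aop (q c : ℂ) {N : ℕ} (w : Fin N → ℂ) (z : ℂ) :
    Matrix (Fin N → Fin 3) (Fin N → Fin 3) ℂ :=
  Matrix.of fun σ τ => monodromy q c w z (0, σ) (0, τ)

/-- The operator ℬ(z): auxiliary block (↑,↓) of the monodromy matrix. -/
def Bop (q c : ℂ) {N : ℕ} (w : Fin N → ℂ) (z : ℂ) :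
    Matrix (Fin N → Fin 3) (Fin N → Fin 3) ℂ :=
  Matrix.of fun σ τ => monodromy q c w z (0, σ) (1, τ)

/-- The operator 𝒟(z): auxiliary block (↓,↓) of the monodromy matrix. -/
def Dop (q c : ℂ) {N : ℕ} (w : Fin N → ℂ) (z : ℂ) :
    Matrix (Fin N → Fin 3) (Fin N → Fin 3) ℂ :=
  Matrix.of fun σ τ => monodromy q c w z (1, σ) (1, τ)

lemma mono_weight {q c : ℂ} {N : ℕ} {w : Fin N → ℂ} {z : ℂ}
    {p p' : Fin 2 × (Fin N → Fin 3)} (h : monodromy q c w z p p' ≠ 0) :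
    (p.1 : ℕ) + wtf p.2 = (p'.1 : ℕ) + wtf p'.2 := by
  rw [monodromy_eq_PL] at h
  exact PL_weight _ _ _ h

lemma mono_row {q c : ℂ} {N : ℕ} (w : Fin N → ℂ) (z : ℂ) (τ : Fin N → Fin 3) :
    monodromy q c w z (1, fun _ => 0) (1, τ) =
      (if τ = fun _ => 0 then 1 else 0) * ∏ k : Fin N, br (q⁻¹ * z / w k) := by
  rw [monodromy_eq_PL, PL_row _ (List.nodup_reverse.mpr (List.nodup_finRange N)) τ]
  congr 1
  rw [List.map_reverse, List.prod_reverse, ← List.ofFn_eq_map, List.prod_ofFn]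

lemma Bop_step (q c z : ℂ) {n : ℕ} (w : Fin (n+n) → ℂ) (τ : Fin n → Fin 3)
    (χ : Fin (n+n) → Fin 3) :
    Bop q c w z (Fin.append (fun _ => 0) τ) χ =
      (if (fun i => χ (Fin.castAdd n i)) = (fun _ => 0) then 1 else 0) *
      (∏ k : Fin n, br (q⁻¹ * z / w (Fin.castAdd n k))) *
      Bop q c (fun k => w (Fin.natAdd n k)) z τ (fun i => χ (Fin.natAdd n i)) := by
  have hχ : χ = Fin.append (fun i => χ (Fin.castAdd n i)) (fun i => χ (Fin.natAdd n i)) :=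
    ((appendEquiv n).right_inv χ).symm
  simp only [Bop, Matrix.of_apply]
  conv_lhs => rw [hχ]
  rw [mono_split]
  rw [Fin.sum_univ_two]
  have h0 : monodromy q c (fun k => w (Fin.castAdd n k)) z ((0 : Fin 2), fun _ => 0)
      (1, fun i => χ (Fin.castAdd n i)) = 0 := by
    by_contra h
    have := mono_weight h
    simp only [wtf_zero] at this
    simp [Fin.val_zero, Fin.val_one] at this
    omega
  rw [h0, mul_zero, zero_add, mono_row]
  ring

lemma Bprod (q c : ℂ) {n : ℕ} (w : Fin (n+n) → ℂ) :
    ∀ (zs : List ℂ) (τ : Fin n → Fin 3) (χ : Fin (n+n) → Fin 3),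
    ((zs.map fun z => Bop q c w z).prod) (Fin.append (fun _ => 0) τ) χ =
      (if (fun i => χ (Fin.castAdd n i)) = (fun _ => 0) then 1 else 0) *
      (zs.map fun z => ∏ k : Fin n, br (q⁻¹ * z / w (Fin.castAdd n k))).prod *
      ((zs.map fun z => Bop q c (fun k => w (Fin.natAdd n k)) z).prod) τ
        (fun i => χ (Fin.natAdd n i)) := by
  intro zs
  induction zs with
  | nil =>
    intro τ χ
    have hχ : χ = Fin.append (fun i => χ (Fin.castAdd n i)) (fun i => χ (Fin.natAdd n i)) :=
      ((appendEquiv n).right_inv χ).symm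
    simp only [List.map_nil, List.prod_nil, Matrix.one_apply]
    conv_lhs => rw [hχ]
    rw [if_congr (append_eq_append_iff
      (a := fun _ => 0) (b := τ)
      (a' := fun i => χ (Fin.castAdd n i)) (b' := fun i => χ (Fin.natAdd n i))) rfl rfl]
    by_cases h1 : (fun i => χ (Fin.castAdd n i)) = (fun _ : Fin n => (0 : Fin 3)) <;>
      by_cases h2 : τ = fun i => χ (Fin.natAdd n i) <;>
      simp [h1, h2, eq_comm]
  | cons z zs ih =>
    intro τ χ
    rw [List.map_cons, List.prod_cons, Matrix.mul_apply]
    calc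
      ∑ χ' : Fin (n+n) → Fin 3, Bop q c w z (Fin.append (fun _ => 0) τ) χ' *
          ((zs.map fun z => Bop q c w z).prod) χ' χ
        = ∑ p : (Fin n → Fin 3) × (Fin n → Fin 3),
            Bop q c w z (Fin.append (fun _ => 0) τ) (Fin.append p.1 p.2) *
              ((zs.map fun z => Bop q c w z).prod) (Fin.append p.1 p.2) χ := by
          rw [← Equiv.sum_comp (appendEquiv n)
            (fun χ' => Bop q c w z (Fin.append (fun _ => 0) τ) χ' *
              ((zs.map fun z => Bop q c w z).prod) χ' χ)]
          rfl
      _ = ∑ p1 : Fin n → Fin 3, ∑ p2 : Fin n → Fin 3,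
            (((∏ k : Fin n, br (q⁻¹ * z / w (Fin.castAdd n k))) *
              Bop q c (fun k => w (Fin.natAdd n k)) z τ p2 *
              ((zs.map fun z => Bop q c w z).prod) (Fin.append p1 p2) χ) *
            (if p1 = (fun _ => 0) then 1 else 0)) := by
          rw [Fintype.sum_prod_type]
          refine Finset.sum_congr rfl fun p1 _ => Finset.sum_congr rfl fun p2 _ => ?_
          rw [Bop_step]
          have hc : (fun i => Fin.append p1 p2 (Fin.castAdd n i)) = p1 :=
            funext fun i => Fin.append_left _ _ _
          have hn : (fun i => Fin.append p1 p2 (Fin.natAdd n i)) = p2 :=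
            funext fun i => Fin.append_right _ _ _
          rw [hc, hn]
          ring
      _ = ∑ p2 : Fin n → Fin 3,
            ((∏ k : Fin n, br (q⁻¹ * z / w (Fin.castAdd n k))) *
              Bop q c (fun k => w (Fin.natAdd n k)) z τ p2 *
              ((zs.map fun z => Bop q c w z).prod) (Fin.append (fun _ => 0) p2) χ) := by
          rw [Finset.sum_comm]
          refine Finset.sum_congr rfl fun p2 _ => ?_
          rw [sum_delta_right (fun p1 =>
            (∏ k : Fin n, br (q⁻¹ * z / w (Fin.castAdd n k))) *
              Bop q c (fun k => w (Fin.natAdd n k)) z τ p2 *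
              ((zs.map fun z => Bop q c w z).prod) (Fin.append p1 p2) χ) (fun _ => 0)]
      _ = (if (fun i => χ (Fin.castAdd n i)) = (fun _ => 0) then 1 else 0) *
          (((z :: zs).map fun z => ∏ k : Fin n, br (q⁻¹ * z / w (Fin.castAdd n k))).prod) *
          (((z :: zs).map fun z => Bop q c (fun k => w (Fin.natAdd n k)) z).prod) τ
            (fun i => χ (Fin.natAdd n i)) := by
          rw [List.map_cons, List.prod_cons, List.map_cons, List.prod_cons,
            Matrix.mul_apply, Finset.mul_sum]
          refine Finset.sum_congr rfl fun p2 _ => ?_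
          rw [ih p2 χ]
          ring

/-- Bethe reference state `|∧⟩ = |⇑…⇑⟩`. -/
def vac (N : ℕ) : (Fin N → Fin 3) → ℂ := fun σ => if σ = fun _ => 0 then 1 else 0

/-- Bethe vector `|Ψ(w₁,…,w_N)⟩ = ℬ(w₁)⋯ℬ(w_N)|∧⟩`. -/
def bethe (q c : ℂ) {N : ℕ} (w : Fin N → ℂ) : (Fin N → Fin 3) → ℂ :=
  (((List.finRange N).map fun j => Bop q c w (w j)).prod).mulVec (vac N)

/-- Renormalised Bethe vector
`|Ψ̃(w₁,…,w_N)⟩ = c^{−N} (∏_{j<k} [q w_j/w_k])⁻¹ |Ψ(w₁,…,w_N)⟩`. -/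
def betheTilde (q c : ℂ) {N : ℕ} (w : Fin N → ℂ) : (Fin N → Fin 3) → ℂ :=
  ((c ^ N)⁻¹ *
    (∏ pr ∈ Finset.univ.filter (fun pr : Fin N × Fin N => pr.1 < pr.2),
      br (q * w pr.1 / w pr.2))⁻¹) • bethe q c w


lemma mulVec_vac {N : ℕ} (M : Matrix (Fin N → Fin 3) (Fin N → Fin 3) ℂ)
    (σ : Fin N → Fin 3) : M.mulVec (vac N) σ = M σ (fun _ => 0) := by
  simp only [Matrix.mulVec, dotProduct, vac, mul_ite, mul_one, mul_zero,
    Finset.sum_ite_eq', Finset.mem_univ, if_true]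

lemma sigma_star (n : ℕ) :
    (fun i : Fin (n+n) => if (i : ℕ) < n then (0 : Fin 3) else 2) =
      Fin.append (fun _ => 0) (fun _ => 2) := by
  funext i
  induction i using Fin.addCases with
  | left i =>
    rw [Fin.append_left]
    simp only [Fin.coe_castAdd]
    rw [if_pos i.isLt]
  | right i =>
    rw [Fin.append_right]
    simp only [Fin.coe_natAdd]
    rw [if_neg (by omega)]

/-- Size-reduction formula for the simple component `⟨⇑…⇑⇓…⇓|Ψ̃(w₁,…,w_{2n})⟩`:
it reduces to a matrix element of a product of ℬ-operators of the n-site chain with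
inhomogeneities `w_{n+1},…,w_{2n}`. -/
theorem stmt17 (q c : ℂ) (hq : q ≠ 0) (hq4 : q^4 ≠ 1) (hc : c^2 = br q * br (q^2))
    (n : ℕ) (hn : 1 ≤ n) (w : Fin (n+n) → ℂ) (hw : ∀ j, w j ≠ 0)
    (hgen : ∀ j k : Fin (n+n), j < k → q * w j / w k ≠ 1 ∧ q * w j / w k ≠ -1) :
    betheTilde q c w (fun i => if (i : ℕ) < n then 0 else 2) =
      ((∏ j : Fin (n+n), ∏ k : Fin n, br (q⁻¹ * w j / w (Fin.castAdd n k))) /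
          ((br q * br (q^2))^n *
            ∏ pr ∈ Finset.univ.filter (fun pr : Fin (n+n) × Fin (n+n) => pr.1 < pr.2),
              br (q * w pr.1 / w pr.2))) *
        ((((List.finRange (n+n)).map fun j =>
            Bop q c (fun k : Fin n => w (Fin.natAdd n k)) (w j)).prod).mulVec (vac n))
          (fun _ => 2) := by
  have key := Bprod q c w ((List.finRange (n+n)).map w) (fun _ => 2) (fun _ => 0)
  have hcast : ((fun i : Fin n => (fun _ : Fin (n+n) => (0:Fin 3)) (Fin.castAdd n i)) =
      (fun _ : Fin n => (0:Fin 3))) := rfl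
  rw [hcast, if_pos rfl] at key
  have hD : ((((List.finRange (n+n)).map w).map
      fun z => ∏ k : Fin n, br (q⁻¹ * z / w (Fin.castAdd n k))).prod) =
      ∏ j : Fin (n+n), ∏ k : Fin n, br (q⁻¹ * w j / w (Fin.castAdd n k)) := by
    rw [List.map_map, ← List.ofFn_eq_map, List.prod_ofFn]
    rfl
  rw [hD, one_mul] at key
  have hlist1 : ((List.finRange (n+n)).map fun j => Bop q c w (w j)) =
      (((List.finRange (n+n)).map w).map fun z => Bop q c w z) := by
    rw [List.map_map]; rfl
  have hlist2 : ((List.finRange (n+n)).map fun j =>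
      Bop q c (fun k : Fin n => w (Fin.natAdd n k)) (w j)) =
      (((List.finRange (n+n)).map w).map fun z =>
        Bop q c (fun k : Fin n => w (Fin.natAdd n k)) z) := by
    rw [List.map_map]; rfl
  have hE : ((((List.finRange (n+n)).map fun j =>
      Bop q c (fun k : Fin n => w (Fin.natAdd n k)) (w j)).prod).mulVec (vac n))
      (fun _ => 2) =
      ((((List.finRange (n+n)).map w).map fun z =>
        Bop q c (fun k : Fin n => w (Fin.natAdd n k)) z).prod) (fun _ => 2)
        (fun i => (fun _ : Fin (n+n) => (0:Fin 3)) (Fin.natAdd n i)) := by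
    rw [mulVec_vac, hlist2]
  rw [hE]
  have hbethe : bethe q c w (fun i : Fin (n+n) => if (i : ℕ) < n then (0:Fin 3) else 2) =
      (∏ j : Fin (n+n), ∏ k : Fin n, br (q⁻¹ * w j / w (Fin.castAdd n k))) *
      ((((List.finRange (n+n)).map w).map fun z =>
        Bop q c (fun k : Fin n => w (Fin.natAdd n k)) z).prod) (fun _ => 2)
        (fun i => (fun _ : Fin (n+n) => (0:Fin 3)) (Fin.natAdd n i)) := by
    rw [bethe, mulVec_vac, hlist1, sigma_star n]
    exact key
  rw [betheTilde, Pi.smul_apply, hbethe, smul_eq_mul]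
  have hcn : c ^ (n+n) = (br q * br (q^2))^n := by
    rw [show n+n = 2*n from (two_mul n).symm, pow_mul, hc]
  rw [hcn, div_eq_mul_inv, mul_inv]
  ring

end
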